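/- Let A = M_k(F) ⊕ J be a finite dimensional algebra with involution, where the simple part is M_k(F) with the transpose involution and J = J(A) is the Jacobson radical, decomposed as J = J_{00} ⊕ J_{01} ⊕ J_{10} ⊕ J_{11} as M_k(F)-bimodules with unit of M_k(F) acting as indicated. If A satisfies the *-Capelli polynomial Cap^*_{k(k+1)/2 + 1}[Y,X], then J_{01} = J_{10} = 0. -/

import Mathlib

open Matrix

/-- Product of a list in a (possibly non-unital) ring; the empty product is 0. -/
def ncProd {A : Type} [Mul A] [Zero A] : List A → A
  | [] => 0
  | a :: l => l.foldl (· * ·) a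

/-- The m-th Capelli polynomial evaluated at alternating entries `t` and
interspersed entries `x`. -/
def capelli {A : Type} [NonUnitalRing A] (m : ℕ) (t : Fin m → A)
    (x : Fin (m - 1) → A) : A :=
  ∑ σ : Equiv.Perm (Fin m), (Equiv.Perm.sign σ : ℤ) •
    ncProd (List.ofFn fun i : Fin m =>
      if h : (i : ℕ) < m - 1 then t (σ i) * x ⟨(i : ℕ), h⟩ else t (σ i))

set_option maxHeartbeats 8000000

section ListLemmas
variable {R : Type} [NonUnitalRing R]

lemma foldl_mul_zero (L : List R) : L.foldl (· * ·) 0 = 0 := by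
  induction L with
  | nil => rfl
  | cons a l ih => simp only [List.foldl_cons, zero_mul]; exact ih

lemma foldl_mul_assoc (L : List R) : ∀ a b : R,
    L.foldl (· * ·) (a * b) = a * L.foldl (· * ·) b := by
  induction L with
  | nil => intro a b; rfl
  | cons x l ih =>
    intro a b
    simp only [List.foldl_cons]
    rw [mul_assoc, ih]

lemma foldl_mul_add (L : List R) : ∀ a b : R,
    L.foldl (· * ·) (a + b) = L.foldl (· * ·) a + L.foldl (· * ·) b := by
  induction L with
  | nil => intros; rfl
  | cons x l ih => intro a b; simp only [List.foldl_cons, add_mul]; exact ih _ _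

lemma ncProd_middle_add (L1 L2 : List R) (a b : R) :
    ncProd (L1 ++ (a + b) :: L2) = ncProd (L1 ++ a :: L2) + ncProd (L1 ++ b :: L2) := by
  cases L1 with
  | nil => simp only [List.nil_append, ncProd]; exact foldl_mul_add L2 a b
  | cons hd t =>
    simp only [List.cons_append, ncProd, List.foldl_append, List.foldl_cons]
    rw [mul_add]; exact foldl_mul_add L2 _ _

lemma ncProd_adjacent (L1 L2 : List R) (a b : R) (h : a * b = 0) :
    ncProd (L1 ++ a :: b :: L2) = 0 := by
  cases L1 with
  | nil =>
    simp only [List.nil_append, ncProd, List.foldl_cons]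
    rw [h]; exact foldl_mul_zero L2
  | cons hd t =>
    simp only [List.cons_append, ncProd, List.foldl_append, List.foldl_cons]
    rw [mul_assoc, h, mul_zero]; exact foldl_mul_zero L2

end ListLemmas

lemma ofFn_split {α : Type} {n : ℕ} (f : Fin n → α) (j : ℕ) (h : j < n) :
    List.ofFn f = (List.ofFn fun i : Fin j => f ⟨i, i.2.trans h⟩) ++
      f ⟨j, h⟩ :: (List.ofFn fun i : Fin (n - (j+1)) => f ⟨j + 1 + i, by omega⟩) := by
  apply List.ext_getElem
  · simp; omega
  · intro i h1 h2
    rcases lt_trichotomy i j with hij | hij | hij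
    · rw [List.getElem_append_left (by simpa using hij)]
      simp
    · subst hij
      rw [List.getElem_append_right (by simp), List.getElem_cons]
      simp
    · rw [List.getElem_append_right (by simp; omega), List.getElem_cons]
      have : i - (List.ofFn fun i : Fin j => f ⟨i, i.2.trans h⟩).length ≠ 0 := by simp; omega
      simp only [this, dite_eq_ite, if_neg this]
      simp only [List.length_ofFn, List.getElem_ofFn]
      congr 1
      simp
      omega

variable {F : Type} [Field F] {k : ℕ}

abbrev EE (i j : Fin k) : Matrix (Fin k) (Fin k) F := single i j 1

def symM (a b : Fin k) : Matrix (Fin k) (Fin k) F := EE a b + EE b a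

lemma EE_apply (i j c d : Fin k) : (EE i j : Matrix (Fin k) (Fin k) F) c d
    = if i = c ∧ j = d then 1 else 0 := by simp [single]

lemma symM_apply (a b c d : Fin k) : (symM a b : Matrix (Fin k) (Fin k) F) c d
    = (if a = c ∧ b = d then (1:F) else 0) + (if b = c ∧ a = d then 1 else 0) := by
  simp [symM, EE_apply]

lemma symM_transpose (a b : Fin k) : (symM a b : Matrix (Fin k) (Fin k) F)ᵀ = symM a b := by
  ext c d
  simp only [transpose_apply, symM_apply]
  rw [add_comm]
  congr 1
  · exact if_congr and_comm rfl rfl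
  · exact if_congr and_comm rfl rfl

lemma EE_mul_EE (i j f g : Fin k) : (EE i j : Matrix (Fin k) (Fin k) F) * EE f g
    = if j = f then EE i g else 0 := by
  by_cases h : j = f
  · subst h; rw [single_mul_single_same, one_mul, if_pos rfl]
  · rw [if_neg h, single_mul_single_of_ne _ _ _ (h := h)]

lemma unit_mul_mul_unit (A : Matrix (Fin k) (Fin k) F) (r v f g : Fin k) :
    (EE r v : Matrix (Fin k) (Fin k) F) * A * EE f g = A v f • EE r g := by
  ext c d
  simp only [mul_apply, EE_apply, Matrix.smul_apply, smul_eq_mul]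
  by_cases hr : r = c <;> by_cases hg : g = d <;>
    simp [hr, hg, ite_and, Finset.sum_ite_eq, Finset.sum_ite_eq', mul_comm]

lemma symM_mul_unit (a b f g : Fin k) :
    (symM a b : Matrix (Fin k) (Fin k) F) * EE f g
      = (if f = b then EE a g else 0) + (if f = a then EE b g else 0) := by
  unfold symM
  rw [add_mul, EE_mul_EE, EE_mul_EE]
  congr 1
  · by_cases h : f = b
    · rw [if_pos h, if_pos h.symm]
    · rw [if_neg h, if_neg (fun hh => h hh.symm)]
  · by_cases h : f = a
    · rw [if_pos h, if_pos h.symm]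
    · rw [if_neg h, if_neg (fun hh => h hh.symm)]

lemma unit_mul_symM (r v a b : Fin k) :
    (EE r v : Matrix (Fin k) (Fin k) F) * symM a b
      = (if v = a then EE r b else 0) + (if v = b then EE r a else 0) := by
  unfold symM
  rw [mul_add, EE_mul_EE, EE_mul_EE]

lemma one_eq_sum_EE (hk : 0 < k) : (1 : Matrix (Fin k) (Fin k) F) = ∑ r : Fin k, EE r r := by
  ext c d
  simp only [Matrix.sum_apply, EE_apply, one_apply]
  by_cases h : c = d
  · subst h; simp [ite_and, Finset.sum_ite_eq']
  · simp only [if_neg h]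
    symm
    apply Finset.sum_eq_zero
    intro r _
    rw [if_neg]
    rintro ⟨rfl, rfl⟩
    exact h rfl

lemma foldl_eq_mul_prod {Mo : Type} [Monoid Mo] (l : List Mo) : ∀ b : Mo,
    l.foldl (· * ·) b = b * l.prod := by
  induction l with
  | nil => intro b; simp
  | cons x l ih => intro b; simp only [List.foldl_cons, List.prod_cons, ih, mul_assoc]


def incF {k : ℕ} (v : Fin k) (g : ℕ → Fin k) : ℕ → Fin k
  | 0 => v
  | (i+1) => g i

lemma chain_lemma : ∀ (n : ℕ) (A : ℕ → Matrix (Fin k) (Fin k) F) (f g : ℕ → Fin k)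
    (r v : Fin k),
    (EE r v : Matrix (Fin k) (Fin k) F) *
      (List.ofFn (fun i : Fin n => A i * EE (f i) (g i))).prod
    = (∏ i ∈ Finset.range n, A i (incF v g i) (f i)) • EE r (incF v g n) := by
  intro n
  induction n with
  | zero => intro A f g r v; simp [incF]
  | succ n ih =>
    intro A f g r v
    rw [List.ofFn_succ]
    simp only [List.prod_cons]
    have hlist : (List.ofFn fun i : Fin n =>
        A (i.succ : Fin (n+1)).val * EE (f (i.succ : Fin (n+1)).val) (g (i.succ : Fin (n+1)).val))
        = (List.ofFn fun i : Fin n =>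
        (fun j => A (j+1)) i.val * EE ((fun j => f (j+1)) i.val) ((fun j => g (j+1)) i.val)) := by
      congr 1
    rw [← mul_assoc]
    calc (EE r v : Matrix (Fin k) (Fin k) F) * (A 0 * EE (f 0) (g 0)) *
          (List.ofFn fun i : Fin n => A i.succ.val * EE (f i.succ.val) (g i.succ.val)).prod
        = ((EE r v : Matrix (Fin k) (Fin k) F) * A 0 * EE (f 0) (g 0)) *
          (List.ofFn fun i : Fin n => A (i.val+1) * EE (f (i.val+1)) (g (i.val+1))).prod := by
          rw [← mul_assoc]
          congr 2
      _ = (A 0 v (f 0) • (EE r (g 0) : Matrix (Fin k) (Fin k) F)) *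
          (List.ofFn fun i : Fin n => A (i.val+1) * EE (f (i.val+1)) (g (i.val+1))).prod := by
          rw [unit_mul_mul_unit]
      _ = A 0 v (f 0) • ((EE r (g 0) : Matrix (Fin k) (Fin k) F) *
          (List.ofFn fun i : Fin n => A (i.val+1) * EE (f (i.val+1)) (g (i.val+1))).prod) := by
          rw [smul_mul_assoc]
      _ = A 0 v (f 0) • ((∏ i ∈ Finset.range n,
            A (i+1) (incF (g 0) (fun j => g (j+1)) i) (f (i+1))) •
            (EE r (incF (g 0) (fun j => g (j+1)) n) : Matrix (Fin k) (Fin k) F)) := by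
          rw [ih (fun j => A (j+1)) (fun j => f (j+1)) (fun j => g (j+1)) r (g 0)]
      _ = (∏ i ∈ Finset.range (n+1), A i (incF v g i) (f i)) •
            (EE r (incF v g (n+1)) : Matrix (Fin k) (Fin k) F) := by
          rw [smul_smul, Finset.prod_range_succ']
          have h1 : ∀ i, incF (g 0) (fun j => g (j+1)) i = incF v g (i+1) := by
            intro i; cases i <;> rfl
          simp only [h1]
          rw [mul_comm]
          rfl

lemma partI_core [CharZero F] (hk2 : 2 ≤ k) (N : ℕ) (q2 : Fin (N+2) ≃ Sym2 (Fin k))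
    (hq0 : q2 ⟨0, by omega⟩ = Sym2.mk (⟨0, by omega⟩ : Fin k) (⟨0, by omega⟩ : Fin k))
    (hqL : q2 ⟨N+1, by omega⟩ = Sym2.mk (⟨1, by omega⟩ : Fin k) (⟨1, by omega⟩ : Fin k)) :
    ∃ (s : Fin (N+2) → Matrix (Fin k) (Fin k) F)
      (x : Fin (N+2-1) → Matrix (Fin k) (Fin k) F),
      (∀ i, (s i)ᵀ = s i) ∧ capelli (N+2) s x ≠ 0 := by
  have hk0 : 0 < k := by omega
  have pf0 : 0 < N+2 := by omega
  have pfL : N+1 < N+2 := by omega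
  set z : Fin k := ⟨0, by omega⟩ with hzdef
  set o : Fin k := ⟨1, by omega⟩ with hodef
  have hzo : z ≠ o := by
    intro h; have := congrArg Fin.val h; simp [hzdef, hodef] at this
  set P : ℕ → Fin k × Fin k := fun i => if h : i < N+2 then (q2 ⟨i, h⟩).out else (z, z)
    with hPdef
  set a : ℕ → Fin k := fun i => (P i).1 with hadef
  set b : ℕ → Fin k := fun i => (P i).2 with hbdef
  have hmk : ∀ i (h : i < N+2), Sym2.mk (a i) (b i) = q2 ⟨i, h⟩ := by
    intro i h
    simp only [hadef, hbdef, hPdef, dif_pos h]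
    exact (q2 ⟨i, h⟩).out_eq
  have hinj : ∀ i j, i < N+2 → j < N+2 →
      Sym2.mk (a i) (b i) = Sym2.mk (a j) (b j) → i = j := by
    intro i j hi hj h
    rw [hmk i hi, hmk j hj] at h
    have := q2.injective h
    simpa using congrArg Fin.val this
  have hP0 : a 0 = z ∧ b 0 = z := by
    have h := hmk 0 (by omega)
    rw [hq0] at h
    rcases Sym2.eq_iff.mp h with ⟨h1, h2⟩ | ⟨h1, h2⟩ <;> exact ⟨h1, h2⟩
  have hPL : a (N+1) = o ∧ b (N+1) = o := by
    have h := hmk (N+1) (by omega)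
    rw [hqL] at h
    rcases Sym2.eq_iff.mp h with ⟨h1, h2⟩ | ⟨h1, h2⟩ <;> exact ⟨h1, h2⟩
  -- the substitution
  set s : Fin (N+2) → Matrix (Fin k) (Fin k) F :=
    fun l => symM (a l.val) (b l.val) with hsdef
  set x : Fin (N+2-1) → Matrix (Fin k) (Fin k) F :=
    fun l => EE (b l.val) (a (l.val+1)) with hxdef
  refine ⟨s, x, fun i => symM_transpose _ _, ?_⟩
  -- canonical form of each monomial
  have key : ∀ π : Equiv.Perm (Fin (N+2)),
      ncProd (List.ofFn fun i : Fin (N+2) =>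
        if h : (i : ℕ) < (N+2) - 1 then s (π i) * x ⟨(i : ℕ), h⟩ else s (π i))
      = (s (π ⟨0, pf0⟩) * EE (b 0) (a 1)) *
        (List.ofFn fun i : Fin N =>
          s (π ⟨i.val+1, by omega⟩) * EE (b (i.val+1)) (a (i.val+2))).prod *
        s (π ⟨N+1, pfL⟩) := by
    intro π
    have hhead : (if h : ((0 : Fin (N+2)) : ℕ) < (N+2) - 1
          then s (π 0) * x ⟨((0 : Fin (N+2)) : ℕ), h⟩ else s (π 0))
        = s (π ⟨0, pf0⟩) * EE (b 0) (a 1) := by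
      have h0 : ((0 : Fin (N+2)) : ℕ) < (N+2) - 1 := by
        show (0 : ℕ) < N + 2 - 1
        omega
      rw [dif_pos h0]
      rfl
    have hmid : (List.ofFn fun i : Fin (N+1) =>
          if h : ((i.succ : Fin (N+2)) : ℕ) < (N+2) - 1
          then s (π i.succ) * x ⟨((i.succ : Fin (N+2)) : ℕ), h⟩ else s (π i.succ))
        = (List.ofFn fun i : Fin N =>
            s (π ⟨i.val+1, by omega⟩) * EE (b (i.val+1)) (a (i.val+2))).concat
          (s (π ⟨N+1, pfL⟩)) := by
      rw [List.ofFn_succ']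
      congr 1
      · apply List.ofFn_inj.mpr
        funext i
        have hc : ((i.castSucc.succ : Fin (N+2)) : ℕ) < (N+2) - 1 := by
          show i.val + 1 < N + 2 - 1
          omega
        rw [dif_pos hc]
        rfl
      · have hc : ¬ (((Fin.last N).succ : Fin (N+2)) : ℕ) < (N+2) - 1 := by
          show ¬ (N + 1 < N + 2 - 1)
          omega
        rw [dif_neg hc]
        rfl
    rw [List.ofFn_succ, hmid, hhead, ncProd, List.concat_eq_append, List.foldl_append]
    simp only [List.foldl_cons, List.foldl_nil]
    rw [foldl_eq_mul_prod]
  -- chain step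
  have hinc : ∀ i : ℕ, incF (a 1) (fun j => a (j+2)) i = a (i+1) := by
    intro i; cases i <;> rfl
  have hchain : ∀ (π : Equiv.Perm (Fin (N+2))) (r : Fin k),
      (EE r (a 1) : Matrix (Fin k) (Fin k) F) *
        (List.ofFn fun i : Fin N =>
          s (π ⟨i.val+1, by omega⟩) * EE (b (i.val+1)) (a (i.val+2))).prod
      = (∏ i : Fin N,
          (symM (a ((π ⟨(i:ℕ)+1, by omega⟩ : Fin (N+2)) : ℕ))
            (b ((π ⟨(i:ℕ)+1, by omega⟩ : Fin (N+2)) : ℕ)) :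
              Matrix (Fin k) (Fin k) F) (a ((i:ℕ)+1)) (b ((i:ℕ)+1)))
          • EE r (a (N+1)) := by
    intro π r
    have hcl := chain_lemma (F := F) (k := k) N
      (fun i => if h : i+1 < N+2 then
          symM (a ((π ⟨i+1, h⟩ : Fin (N+2)) : ℕ)) (b ((π ⟨i+1, h⟩ : Fin (N+2)) : ℕ))
        else 0)
      (fun i => b (i+1)) (fun i => a (i+2)) r (a 1)
    have hl : (List.ofFn fun i : Fin N =>
        (if h : (i:ℕ)+1 < N+2 then
          symM (a ((π ⟨(i:ℕ)+1, h⟩ : Fin (N+2)) : ℕ)) (b ((π ⟨(i:ℕ)+1, h⟩ : Fin (N+2)) : ℕ))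
        else 0) * EE (b ((i:ℕ)+1)) (a ((i:ℕ)+2)))
        = List.ofFn fun i : Fin N =>
            s (π ⟨i.val+1, by omega⟩) * EE (b (i.val+1)) (a (i.val+2)) := by
      apply List.ofFn_inj.mpr; funext i
      rw [dif_pos (by omega : (i:ℕ)+1 < N+2)]
    rw [hl] at hcl
    rw [hcl, hinc]
    congr 1
    rw [Finset.prod_range]
    apply Finset.prod_congr rfl
    intro i _
    rw [dif_pos (show (i:ℕ)+1 < N+2 by omega), hinc]
  -- the scalar
  set cpi : Equiv.Perm (Fin (N+2)) → F := fun π => ∏ i : Fin N,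
      (symM (a ((π ⟨(i:ℕ)+1, by omega⟩ : Fin (N+2)) : ℕ))
        (b ((π ⟨(i:ℕ)+1, by omega⟩ : Fin (N+2)) : ℕ)) :
          Matrix (Fin k) (Fin k) F) (a ((i:ℕ)+1)) (b ((i:ℕ)+1)) with hcpidef
  -- full monomial formula
  have hmono : ∀ π : Equiv.Perm (Fin (N+2)),
      ncProd (List.ofFn fun i : Fin (N+2) =>
        if h : (i : ℕ) < (N+2) - 1 then s (π i) * x ⟨(i : ℕ), h⟩ else s (π i))
      = (if b 0 = b ((π ⟨0, pf0⟩ : Fin (N+2)) : ℕ) then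
          cpi π • ((EE (a ((π ⟨0, pf0⟩ : Fin (N+2)) : ℕ)) (a (N+1)) :
            Matrix (Fin k) (Fin k) F) * s (π ⟨N+1, pfL⟩)) else 0)
        + (if b 0 = a ((π ⟨0, pf0⟩ : Fin (N+2)) : ℕ) then
          cpi π • ((EE (b ((π ⟨0, pf0⟩ : Fin (N+2)) : ℕ)) (a (N+1)) :
            Matrix (Fin k) (Fin k) F) * s (π ⟨N+1, pfL⟩)) else 0) := by
    intro π
    rw [key π]
    have hs0 : s (π ⟨0, pf0⟩)
        = symM (a ((π ⟨0, pf0⟩ : Fin (N+2)) : ℕ)) (b ((π ⟨0, pf0⟩ : Fin (N+2)) : ℕ)) := rfl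
    rw [hs0, symM_mul_unit]
    simp only [add_mul, ite_mul, zero_mul]
    congr 1
    · by_cases hcond : b 0 = b ((π ⟨0, pf0⟩ : Fin (N+2)) : ℕ)
      · rw [if_pos hcond, if_pos hcond, hchain π, smul_mul_assoc]
      · rw [if_neg hcond, if_neg hcond]
    · by_cases hcond : b 0 = a ((π ⟨0, pf0⟩ : Fin (N+2)) : ℕ)
      · rw [if_pos hcond, if_pos hcond, hchain π, smul_mul_assoc]
      · rw [if_neg hcond, if_neg hcond]
  -- identity scalar is nonzero
  have hcpi1 : cpi 1 ≠ 0 := by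
    rw [hcpidef]
    apply Finset.prod_ne_zero_iff.mpr
    intro i _
    simp only [Equiv.Perm.one_apply]
    rw [symM_apply]
    rw [if_pos ⟨rfl, rfl⟩]
    by_cases hab : b ((i:ℕ)+1) = a ((i:ℕ)+1) ∧ a ((i:ℕ)+1) = b ((i:ℕ)+1)
    · rw [if_pos hab]
      intro hcontra
      have : (2 : F) = 0 := by rw [← hcontra]; norm_num
      exact two_ne_zero this
    · rw [if_neg hab, add_zero]
      exact one_ne_zero
  -- value for the identity permutation
  have hone : ncProd (List.ofFn fun i : Fin (N+2) =>
      if h : (i : ℕ) < (N+2) - 1 then s ((1 : Equiv.Perm (Fin (N+2))) i) * x ⟨(i : ℕ), h⟩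
      else s ((1 : Equiv.Perm (Fin (N+2))) i))
      = cpi 1 • ((EE z o + EE z o : Matrix (Fin k) (Fin k) F))
        + cpi 1 • ((EE z o + EE z o : Matrix (Fin k) (Fin k) F)) := by
    rw [hmono 1]
    simp only [Equiv.Perm.one_apply]
    have hlast : (EE z (a (N+1)) : Matrix (Fin k) (Fin k) F) *
        s (⟨N+1, pfL⟩ : Fin (N+2)) = EE z o + EE z o := by
      have : (EE z (a (N+1)) : Matrix (Fin k) (Fin k) F) * s (⟨N+1, pfL⟩ : Fin (N+2))
          = (if a (N+1) = a (N+1) then EE z (b (N+1)) else 0)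
            + (if a (N+1) = b (N+1) then EE z (a (N+1)) else 0) := unit_mul_symM _ _ _ _
      rw [this, if_pos rfl, if_pos (by rw [hPL.1, hPL.2]), hPL.1, hPL.2]
    simp only [Equiv.Perm.one_apply, hP0.1, hP0.2, eq_self_iff_true, if_true, ite_true]
    rw [hlast]
  -- vanishing for non-identity permutations
  have hzero : ∀ π : Equiv.Perm (Fin (N+2)), π ≠ 1 →
      ncProd (List.ofFn fun i : Fin (N+2) =>
        if h : (i : ℕ) < (N+2) - 1 then s (π i) * x ⟨(i : ℕ), h⟩ else s (π i)) = 0 := by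
    intro π hπ
    rw [hmono π]
    by_cases hmid2 : ∀ i : ℕ, ∀ _ : i < N, π ⟨i+1, by omega⟩ = ⟨i+1, by omega⟩
    · -- π fixes the middle, so π(0) is 0 or N+1
      have hval : ∀ u : Fin (N+2), 1 ≤ u.val → u.val ≤ N → π u = u := by
        intro u h1 h2
        have hu : u = ⟨(u.val-1)+1, by omega⟩ := by apply Fin.ext; simp; omega
        rw [hu]
        exact hmid2 (u.val-1) (by omega)
      have h0cases : ((π ⟨0, pf0⟩ : Fin (N+2)) : ℕ) = 0 ∨
          ((π ⟨0, pf0⟩ : Fin (N+2)) : ℕ) = N+1 := by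
        by_contra hc
        push_neg at hc
        obtain ⟨hc0, hcL⟩ := hc
        have hjlt : ((π ⟨0, pf0⟩ : Fin (N+2)) : ℕ) < N+2 := (π ⟨0, pf0⟩).2
        have hfix : π (π ⟨0, pf0⟩) = π ⟨0, pf0⟩ :=
          hval (π ⟨0, pf0⟩) (by omega) (by omega)
        have h2 := π.injective hfix
        have hval0 : ((π ⟨0, pf0⟩ : Fin (N+2)) : ℕ) = 0 := congrArg Fin.val h2
        exact hc0 hval0
      rcases h0cases with h0 | h0
      · -- then π = 1, contradiction
        exfalso; apply hπ
        have hπ0 : π ⟨0, pf0⟩ = ⟨0, pf0⟩ := Fin.ext h0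
        apply Equiv.ext
        intro u
        rcases Nat.lt_or_ge u.val 1 with hu | hu
        · have : u = ⟨0, pf0⟩ := by apply Fin.ext; omega
          rw [this, hπ0]; rfl
        rcases Nat.lt_or_ge u.val (N+1) with hu2 | hu2
        · rw [hval u hu (by omega)]; rfl
        · -- u = last
          have huL : u = ⟨N+1, pfL⟩ := by apply Fin.ext; have := u.2; simp; omega
          have hw : (π u).val = 0 ∨ (1 ≤ (π u).val ∧ (π u).val ≤ N) ∨ (π u).val = N+1 := by
            have := (π u).2; omega
          have huLv : (u : ℕ) = N+1 := by
            have := congrArg Fin.val huL; simpa using this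
          rcases hw with hw | hw | hw
          · exfalso
            have heq : π u = π ⟨0, pf0⟩ := by rw [hπ0]; exact Fin.ext hw
            have heq2 := π.injective heq
            have := congrArg Fin.val heq2
            simp at this
            omega
          · exfalso
            have hfix : π (π u) = π u := hval _ hw.1 hw.2
            have heq2 : π u = u := π.injective hfix
            have := congrArg Fin.val heq2
            omega
          · simp only [Equiv.Perm.one_apply]
            apply Fin.ext
            omega
      · -- swap case: the first factor dies
        rw [hP0.2]
        have hb1 : b ((π ⟨0, pf0⟩ : Fin (N+2)) : ℕ) = o := by rw [h0, hPL.2]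
        have ha1 : a ((π ⟨0, pf0⟩ : Fin (N+2)) : ℕ) = o := by rw [h0, hPL.1]
        rw [hb1, ha1, if_neg hzo, add_zero]
    · -- a middle slot moved: the chain scalar vanishes
      push_neg at hmid2
      obtain ⟨i, hiN, hne⟩ := hmid2
      have hcpi0 : cpi π = 0 := by
        rw [hcpidef]
        apply Finset.prod_eq_zero (Finset.mem_univ (⟨i, hiN⟩ : Fin N))
        set m := ((π ⟨i+1, by omega⟩ : Fin (N+2)) : ℕ) with hm
        have hmlt : m < N+2 := (π ⟨i+1, by omega⟩).2
        have hmne : m ≠ i+1 := by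
          intro hcon
          apply hne
          apply Fin.ext
          exact hcon
        rw [symM_apply]
        have hc1 : ¬ (a m = a (i+1) ∧ b m = b (i+1)) := by
          rintro ⟨e1, e2⟩
          apply hmne
          apply hinj m (i+1) hmlt (by omega)
          rw [e1, e2]
        have hc2 : ¬ (b m = a (i+1) ∧ a m = b (i+1)) := by
          rintro ⟨e1, e2⟩
          apply hmne
          apply hinj m (i+1) hmlt (by omega)
          apply Sym2.eq_iff.mpr
          right
          exact ⟨e2, e1⟩
        rw [if_neg hc1, if_neg hc2, add_zero]
      rw [hcpi0]
      simp only [zero_smul, ite_self, add_zero]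
  -- conclusion
  show capelli (N+2) s x ≠ 0
  unfold capelli
  rw [Finset.sum_eq_single (1 : Equiv.Perm (Fin (N+2)))]
  · rw [hone]
    simp only [_root_.map_one, Units.val_one, one_smul]
    intro hcontra
    apply hcpi1
    have hent := congrFun (congrFun hcontra z) o
    simp only [Matrix.add_apply, Matrix.smul_apply, EE_apply, smul_eq_mul,
      Matrix.zero_apply, eq_self_iff_true, and_self, if_true, ite_true] at hent
    have h4 : cpi 1 * 4 = 0 := by ring_nf; ring_nf at hent; linear_combination hent
    rcases mul_eq_zero.mp h4 with h | h
    · exact h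
    · exact absurd h (by norm_num)
  · intro π _ hπ
    rw [hzero π hπ, smul_zero]
  · intro hmem
    exact absurd (Finset.mem_univ _) hmem

lemma partI [CharZero F] (hk : 0 < k) :
    ∃ (s : Fin (k*(k+1)/2) → Matrix (Fin k) (Fin k) F)
      (x : Fin (k*(k+1)/2 - 1) → Matrix (Fin k) (Fin k) F),
      (∀ i, (s i)ᵀ = s i) ∧ capelli (k*(k+1)/2) s x ≠ 0 := by
  rcases Nat.lt_or_ge k 2 with hk1 | hk2
  · -- k = 1
    have hk1' : k = 1 := by omega
    subst hk1'
    refine ⟨fun _ => (1 : Matrix (Fin 1) (Fin 1) F), fun i => (Fin.elim0 i : _), fun i => Matrix.transpose_one, ?_⟩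
    have : capelli (1*(1+1)/2) (fun _ : Fin (1*(1+1)/2) => (1 : Matrix (Fin 1) (Fin 1) F))
        (fun i => Fin.elim0 i) = 1 := by
      unfold capelli
      rw [Fintype.sum_subsingleton _ (1 : Equiv.Perm (Fin 1))]
      simp only [_root_.map_one, Units.val_one, one_smul]
      show ncProd (List.ofFn fun i : Fin 1 => if h : (i:ℕ) < 0 then _ else (1 : Matrix (Fin 1) (Fin 1) F)) = 1
      simp only [Nat.not_lt_zero, dif_neg, not_false_iff]
      rfl
    rw [this]
    exact one_ne_zero
  · -- k ≥ 2
    have hcard : Fintype.card (Sym2 (Fin k)) = k*(k+1)/2 := by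
      rw [Sym2.card]
      simp only [Fintype.card_fin]
      rw [Nat.choose_two_right]
      simp only [Nat.add_sub_cancel]
      rw [Nat.mul_comm]
    have h3 : 3 ≤ k*(k+1)/2 := by
      rw [Nat.le_div_iff_mul_le (by omega : 0 < 2)]
      calc 3 * 2 = 6 := rfl
        _ ≤ k * (k+1) := by nlinarith
    obtain ⟨N, hN⟩ : ∃ N, k*(k+1)/2 = N+2 := ⟨k*(k+1)/2 - 2, by omega⟩
    rw [hN]
    have hcard2 : Fintype.card (Sym2 (Fin k)) = N+2 := by rw [hcard, hN]
    set q0 : Fin (N+2) ≃ Sym2 (Fin k) := (Fintype.equivFinOfCardEq hcard2).symm with hq0def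
    set d00 : Sym2 (Fin k) := Sym2.mk (⟨0, by omega⟩ : Fin k) (⟨0, by omega⟩ : Fin k) with hd00
    set d11 : Sym2 (Fin k) := Sym2.mk (⟨1, by omega⟩ : Fin k) (⟨1, by omega⟩ : Fin k) with hd11
    have hd : d00 ≠ d11 := by
      intro h
      rcases Sym2.eq_iff.mp h with ⟨h1, _⟩ | ⟨h1, _⟩ <;>
        · have := congrArg Fin.val h1; simp at this
    set i0 : Fin (N+2) := q0.symm d00 with hi0
    set q1 : Fin (N+2) ≃ Sym2 (Fin k) :=
      (Equiv.swap (⟨0, by omega⟩ : Fin (N+2)) i0).trans q0 with hq1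
    have hq1_0 : q1 ⟨0, by omega⟩ = d00 := by
      rw [hq1]
      simp only [Equiv.trans_apply, Equiv.swap_apply_left, hi0, Equiv.apply_symm_apply]
    set i1 : Fin (N+2) := q1.symm d11 with hi1def
    have hi1 : i1 ≠ ⟨0, by omega⟩ := by
      intro h
      apply hd
      rw [← hq1_0, ← h, hi1def, Equiv.apply_symm_apply]
    set q2 : Fin (N+2) ≃ Sym2 (Fin k) :=
      (Equiv.swap (⟨N+1, by omega⟩ : Fin (N+2)) i1).trans q1 with hq2
    have hq2_L : q2 ⟨N+1, by omega⟩ = d11 := by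
      rw [hq2]
      simp only [Equiv.trans_apply, Equiv.swap_apply_left, hi1def, Equiv.apply_symm_apply]
    have hq2_0 : q2 ⟨0, by omega⟩ = d00 := by
      rw [hq2]
      simp only [Equiv.trans_apply]
      rw [Equiv.swap_apply_of_ne_of_ne, hq1_0]
      · intro h
        have := congrArg Fin.val h
        simp at this
      · intro h
        exact hi1 h.symm
    exact partI_core hk2 N q2 hq2_0 hq2_L

/-- let A = M_k(F) ⊕ J with the transpose involution on M_k(F) and J
the (nilpotent, *-stable) Jacobson radical, decomposed into M_k(F)-bimodules
J = J₀₀ ⊕ J₀₁ ⊕ J₁₀ ⊕ J₁₁ as indicated.  If A satisfies the *-Capelli polynomial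
Cap*_{k(k+1)/2+1}[Y,X], then J₀₁ = J₁₀ = 0. -/
theorem stmt_11 (F : Type) [Field F] [CharZero F] (k : ℕ) (hk : 0 < k)
    (A : Type) [NonUnitalRing A] [Module F A]
    [SMulCommClass F A A] [IsScalarTower F A A]
    (τ : A →ₗ[F] A)
    (hanti : ∀ a b : A, τ (a * b) = τ b * τ a)
    (hinv : ∀ a : A, τ (τ a) = a)
    (ι : Matrix (Fin k) (Fin k) F →ₗ[F] A)
    (hιmul : ∀ m m' : Matrix (Fin k) (Fin k) F, ι (m * m') = ι m * ι m')
    (hιinj : Function.Injective ι)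
    (hιτ : ∀ m : Matrix (Fin k) (Fin k) F, τ (ι m) = ι mᵀ)
    (Jm : Fin 2 → Fin 2 → Submodule F A)
    -- the unit of M_k(F) acts on J_{pq} on the left as the identity iff p = 1,
    -- as zero iff p = 0; similarly on the right with q
    (hleft : ∀ p q : Fin 2, ∀ v ∈ Jm p q, ι 1 * v = if p = 1 then v else 0)
    (hright : ∀ p q : Fin 2, ∀ v ∈ Jm p q, v * ι 1 = if q = 1 then v else 0)
    -- each J_{pq} is an M_k(F)-bimodule
    (hbimod : ∀ (p q : Fin 2) (m : Matrix (Fin k) (Fin k) F), ∀ v ∈ Jm p q,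
      ι m * v ∈ Jm p q ∧ v * ι m ∈ Jm p q)
    -- J_{pq} J_{il} = 0 for q ≠ i and J_{pq} J_{ql} ⊆ J_{pl}
    (hprod0 : ∀ p q r s : Fin 2, q ≠ r → ∀ v ∈ Jm p q, ∀ w ∈ Jm r s, v * w = 0)
    (hprod : ∀ p q s : Fin 2, ∀ v ∈ Jm p q, ∀ w ∈ Jm q s, v * w ∈ Jm p s)
    -- J₀₁* = J₁₀ and J₁₀* = J₀₁
    (hstar01 : ∀ v ∈ Jm 0 1, τ v ∈ Jm 1 0)
    (hstar10 : ∀ v ∈ Jm 1 0, τ v ∈ Jm 0 1)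
    -- the decomposition A = M_k(F) ⊕ J₀₀ ⊕ J₀₁ ⊕ J₁₀ ⊕ J₁₁ is direct
    (hindep : Jm 0 1 ⊓ Jm 1 0 = ⊥)
    (hdecomp : LinearMap.range ι ⊔ Jm 0 0 ⊔ Jm 0 1 ⊔ Jm 1 0 ⊔ Jm 1 1 = ⊤)
    -- J is nilpotent
    (hnilp : ∃ nn : ℕ, ∀ f : Fin (nn + 1) → A,
      (∀ i, f i ∈ Jm 0 0 ⊔ Jm 0 1 ⊔ Jm 1 0 ⊔ Jm 1 1) → ncProd (List.ofFn f) = 0)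
    -- A satisfies Cap*_{k(k+1)/2 + 1}[Y,X]
    (hcap : ∀ t : Fin (k * (k + 1) / 2 + 1) → A, (∀ i, τ (t i) = t i) →
      ∀ x : Fin (k * (k + 1) / 2 + 1 - 1) → A,
      capelli (k * (k + 1) / 2 + 1) t x = 0) :
    Jm 0 1 = ⊥ ∧ Jm 1 0 = ⊥ := by
  have hM1 : 1 ≤ k * (k + 1) / 2 := by
    rw [Nat.le_div_iff_mul_le (by omega : 0 < 2)]
    nlinarith
  obtain ⟨s, x', hsym, hC⟩ := partI (F := F) (k := k) hk
  -- generic helpers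
  have hfoldJ : ∀ (p q : Fin 2) (L : List A), (∀ y ∈ L, ∃ mmm, y = ι mmm) →
      ∀ z ∈ Jm p q, List.foldl (· * ·) z L ∈ Jm p q := by
    intro p q L
    induction L with
    | nil => intro _ z hz; exact hz
    | cons y L ih =>
      intro hyp z hz
      simp only [List.foldl_cons]
      obtain ⟨mmm, rfl⟩ := hyp y (by simp)
      exact ih (fun y hy => hyp y (by simp [hy])) _ ((hbimod p q mmm z hz).2)
  have hfoldl_iota : ∀ (L : List A) (z : Matrix (Fin k) (Fin k) F),
      (∀ y ∈ L, ∃ mmm, y = ι mmm) → ∃ mmm, List.foldl (· * ·) (ι z) L = ι mmm := by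
    intro L
    induction L with
    | nil => intro z _; exact ⟨z, rfl⟩
    | cons y L ih =>
      intro z hyp
      obtain ⟨m1, rfl⟩ := hyp y (by simp)
      simp only [List.foldl_cons]
      rw [← hιmul]
      exact ih (z * m1) (fun y hy => hyp y (by simp [hy]))
  have hmemJ : ∀ (p q : Fin 2) (L1 L2 : List A), (∀ y ∈ L1, ∃ mmm, y = ι mmm) →
      (∀ y ∈ L2, ∃ mmm, y = ι mmm) → ∀ v ∈ Jm p q, ncProd (L1 ++ v :: L2) ∈ Jm p q := by
    intro p q L1 L2 h1 h2 v hv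
    cases L1 with
    | nil =>
      show List.foldl (· * ·) v L2 ∈ Jm p q
      exact hfoldJ p q L2 h2 v hv
    | cons y L1' =>
      obtain ⟨m0, rfl⟩ := h1 y (by simp)
      show List.foldl (· * ·) (ι m0) (L1' ++ v :: L2) ∈ Jm p q
      rw [List.foldl_append]
      obtain ⟨mP, hP⟩ := hfoldl_iota L1' m0 (fun y hy => h1 y (by simp [hy]))
      rw [hP]
      simp only [List.foldl_cons]
      exact hfoldJ p q L2 h2 _ ((hbimod p q mP v hv).1)
  have hkillprod : ∀ (L1 L2 : List A) (vv : A), L1 ≠ [] →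
      (∀ y ∈ L1, ∃ mmm, y = ι mmm) → (∀ mmm, ι mmm * vv = 0) →
      ncProd (L1 ++ vv :: L2) = 0 := by
    intro L1 L2 vv hne h1 hkill
    rcases List.eq_nil_or_concat L1 with rfl | ⟨L1', y, rfl⟩
    · exact absurd rfl hne
    · obtain ⟨mmm, rfl⟩ := h1 y (by simp)
      rw [List.concat_eq_append, List.append_assoc, List.singleton_append]
      exact ncProd_adjacent L1' L2 _ vv (hkill mmm)
  have hfoldl_map : ∀ (L : List (Matrix (Fin k) (Fin k) F)), L ≠ [] → ∀ z : A,
      List.foldl (· * ·) z (L.map ι) = z * ι (ncProd L) := by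
    intro L
    induction L with
    | nil => intro h; exact absurd rfl h
    | cons m1 L ih =>
      intro _ z
      cases L with
      | nil => simp [ncProd]
      | cons m2 L' =>
        rw [List.map_cons, List.foldl_cons]
        rw [ih (by simp) (z * ι m1), mul_assoc, ← hιmul]
        congr 1
        show (ι (m1 * ncProd (m2 :: L')) : A) = ι (ncProd (m1 :: m2 :: L'))
        congr 1
        show m1 * List.foldl (· * ·) m2 L' = List.foldl (· * ·) (m1 * m2) L'
        rw [foldl_mul_assoc]
  -- the main claim
  have main : ∀ w ∈ Jm 0 1, w = 0 := by
    intro w hw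
    set W := τ w with hWdef
    have hWmem : W ∈ Jm 1 0 := hstar01 w hw
    have hkill_left : ∀ mm : Matrix (Fin k) (Fin k) F, ι mm * w = 0 := by
      intro mm
      have h1 : ι mm * w ∈ Jm 0 1 := (hbimod 0 1 mm w hw).1
      have h2 := hleft 0 1 _ h1
      rw [if_neg (by decide : ¬(0 : Fin 2) = 1)] at h2
      calc ι mm * w = ι 1 * (ι mm * w) := by rw [← mul_assoc, ← hιmul, one_mul]
        _ = 0 := h2
    have hwr : w * ι 1 = w := by
      have h2 := hright 0 1 w hw
      rwa [if_pos rfl] at h2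
    set C := capelli (k * (k + 1) / 2) s x' with hCdef
    -- KEY: for every matrix mm, w * ι (mm * C) = 0
    have hkey : ∀ mm : Matrix (Fin k) (Fin k) F, w * ι (mm * C) = 0 := by
      intro mm
      set u : A := w + W with hu
      set tt : Fin (k*(k+1)/2+1) → A := Fin.cases u (fun j => ι (s j)) with htt
      set ttw : Fin (k*(k+1)/2+1) → A := Fin.cases w (fun j => ι (s j)) with httw
      set ttW : Fin (k*(k+1)/2+1) → A := Fin.cases W (fun j => ι (s j)) with httW
      set X : Fin (k*(k+1)/2) → Matrix (Fin k) (Fin k) F :=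
        fun j => if h : (j : ℕ) = 0 then mm else x' ⟨(j:ℕ) - 1, by omega⟩ with hX
      set xx : Fin (k*(k+1)/2) → A := fun j => ι (X j) with hxx
      have htsym : ∀ i, τ (tt i) = tt i := by
        intro i
        induction i using Fin.cases with
        | zero =>
          show τ u = u
          rw [hu, map_add, ← hWdef, hWdef, hinv]
          exact add_comm W w
        | succ j =>
          show τ (ι (s j)) = ι (s j)
          rw [hιτ, hsym j]
      have hcap0 := hcap tt htsym xx
      set fm : Equiv.Perm (Fin (k*(k+1)/2+1)) → Fin (k*(k+1)/2+1) → A := fun σ i =>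
        if h : (i:ℕ) < k*(k+1)/2+1-1 then tt (σ i) * xx ⟨(i:ℕ), h⟩ else tt (σ i) with hfm
      set fw : Equiv.Perm (Fin (k*(k+1)/2+1)) → Fin (k*(k+1)/2+1) → A := fun σ i =>
        if h : (i:ℕ) < k*(k+1)/2+1-1 then ttw (σ i) * xx ⟨(i:ℕ), h⟩ else ttw (σ i) with hfw
      set fW : Equiv.Perm (Fin (k*(k+1)/2+1)) → Fin (k*(k+1)/2+1) → A := fun σ i =>
        if h : (i:ℕ) < k*(k+1)/2+1-1 then ttW (σ i) * xx ⟨(i:ℕ), h⟩ else ttW (σ i) with hfW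
      have hcap1 : ∑ σ : Equiv.Perm (Fin (k*(k+1)/2+1)),
          (Equiv.Perm.sign σ : ℤ) • ncProd (List.ofFn (fm σ)) = 0 := hcap0
      -- entries away from the special position are ι-images, in all three versions
      have hiota : ∀ (σ : Equiv.Perm (Fin (k*(k+1)/2+1))) (i : Fin (k*(k+1)/2+1)),
          σ i ≠ 0 → ∃ mmm, fm σ i = ι mmm ∧ fw σ i = ι mmm ∧ fW σ i = ι mmm := by
        intro σ i hσi
        obtain ⟨j', hj'⟩ := Fin.eq_succ_of_ne_zero hσi
        by_cases hc : (i:ℕ) < k*(k+1)/2+1-1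
        · refine ⟨s j' * X ⟨(i:ℕ), hc⟩, ?_, ?_, ?_⟩ <;>
            · show (if h : (i:ℕ) < k*(k+1)/2+1-1 then _ else _) = _
              rw [dif_pos hc, hj', hιmul]
              rfl
        · refine ⟨s j', ?_, ?_, ?_⟩ <;>
            · show (if h : (i:ℕ) < k*(k+1)/2+1-1 then _ else _) = _
              rw [dif_neg hc, hj']
              rfl
      have hne0 : ∀ (σ : Equiv.Perm (Fin (k*(k+1)/2+1))) (i : Fin (k*(k+1)/2+1)),
          i ≠ σ.symm 0 → σ i ≠ 0 := by
        intro σ i hi h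
        exact hi ((Equiv.eq_symm_apply σ).mpr h)
      -- the decomposition of each monomial
      have hdec : ∀ σ : Equiv.Perm (Fin (k*(k+1)/2+1)),
          ncProd (List.ofFn (fm σ)) = ncProd (List.ofFn (fw σ)) + ncProd (List.ofFn (fW σ)) := by
        intro σ
        have hjlt : ((σ.symm 0 : Fin (k*(k+1)/2+1)) : ℕ) < k*(k+1)/2+1 := (σ.symm 0).2
        rw [ofFn_split (fm σ) _ hjlt, ofFn_split (fw σ) _ hjlt, ofFn_split (fW σ) _ hjlt]
        have e1 : (List.ofFn fun i : Fin ((σ.symm 0 : Fin (k*(k+1)/2+1)) : ℕ) =>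
            fw σ ⟨(i:ℕ), i.2.trans hjlt⟩)
            = (List.ofFn fun i : Fin ((σ.symm 0 : Fin (k*(k+1)/2+1)) : ℕ) =>
            fm σ ⟨(i:ℕ), i.2.trans hjlt⟩) := by
          apply List.ofFn_inj.mpr; funext i
          have hne : (⟨(i:ℕ), i.2.trans hjlt⟩ : Fin (k*(k+1)/2+1)) ≠ σ.symm 0 := by
            intro h; have := congrArg Fin.val h; simp at this; omega
          obtain ⟨mmm, h1, h2, h3⟩ := hiota σ _ (hne0 σ _ hne)
          rw [h1, h2]
        have e2 : (List.ofFn fun i : Fin ((σ.symm 0 : Fin (k*(k+1)/2+1)) : ℕ) =>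
            fW σ ⟨(i:ℕ), i.2.trans hjlt⟩)
            = (List.ofFn fun i : Fin ((σ.symm 0 : Fin (k*(k+1)/2+1)) : ℕ) =>
            fm σ ⟨(i:ℕ), i.2.trans hjlt⟩) := by
          apply List.ofFn_inj.mpr; funext i
          have hne : (⟨(i:ℕ), i.2.trans hjlt⟩ : Fin (k*(k+1)/2+1)) ≠ σ.symm 0 := by
            intro h; have := congrArg Fin.val h; simp at this; omega
          obtain ⟨mmm, h1, h2, h3⟩ := hiota σ _ (hne0 σ _ hne)
          rw [h1, h3]
        have e3 : (List.ofFn fun i : Fin (k*(k+1)/2+1 - (((σ.symm 0 : Fin (k*(k+1)/2+1)) : ℕ)+1)) =>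
            fw σ ⟨((σ.symm 0 : Fin (k*(k+1)/2+1)) : ℕ) + 1 + (i:ℕ), by omega⟩)
            = (List.ofFn fun i : Fin (k*(k+1)/2+1 - (((σ.symm 0 : Fin (k*(k+1)/2+1)) : ℕ)+1)) =>
            fm σ ⟨((σ.symm 0 : Fin (k*(k+1)/2+1)) : ℕ) + 1 + (i:ℕ), by omega⟩) := by
          apply List.ofFn_inj.mpr; funext i
          have hne : (⟨((σ.symm 0 : Fin (k*(k+1)/2+1)) : ℕ) + 1 + (i:ℕ), by omega⟩ :
              Fin (k*(k+1)/2+1)) ≠ σ.symm 0 := by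
            intro h; have := congrArg Fin.val h; simp at this; omega
          obtain ⟨mmm, h1, h2, h3⟩ := hiota σ _ (hne0 σ _ hne)
          rw [h1, h2]
        have e4 : (List.ofFn fun i : Fin (k*(k+1)/2+1 - (((σ.symm 0 : Fin (k*(k+1)/2+1)) : ℕ)+1)) =>
            fW σ ⟨((σ.symm 0 : Fin (k*(k+1)/2+1)) : ℕ) + 1 + (i:ℕ), by omega⟩)
            = (List.ofFn fun i : Fin (k*(k+1)/2+1 - (((σ.symm 0 : Fin (k*(k+1)/2+1)) : ℕ)+1)) =>
            fm σ ⟨((σ.symm 0 : Fin (k*(k+1)/2+1)) : ℕ) + 1 + (i:ℕ), by omega⟩) := by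
          apply List.ofFn_inj.mpr; funext i
          have hne : (⟨((σ.symm 0 : Fin (k*(k+1)/2+1)) : ℕ) + 1 + (i:ℕ), by omega⟩ :
              Fin (k*(k+1)/2+1)) ≠ σ.symm 0 := by
            intro h; have := congrArg Fin.val h; simp at this; omega
          obtain ⟨mmm, h1, h2, h3⟩ := hiota σ _ (hne0 σ _ hne)
          rw [h1, h3]
        rw [e1, e2, e3, e4]
        have emid : fm σ ⟨((σ.symm 0 : Fin (k*(k+1)/2+1)) : ℕ), hjlt⟩
            = fw σ ⟨((σ.symm 0 : Fin (k*(k+1)/2+1)) : ℕ), hjlt⟩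
              + fW σ ⟨((σ.symm 0 : Fin (k*(k+1)/2+1)) : ℕ), hjlt⟩ := by
          have h0 : σ ⟨((σ.symm 0 : Fin (k*(k+1)/2+1)) : ℕ), hjlt⟩ = 0 := σ.apply_symm_apply 0
          by_cases hc : ((σ.symm 0 : Fin (k*(k+1)/2+1)) : ℕ) < k*(k+1)/2+1-1
          · show (if h : _ < _ then _ else _) = (if h : _ < _ then _ else _) + (if h : _ < _ then _ else _)
            rw [dif_pos hc, dif_pos hc, dif_pos hc, h0]
            show (w + W) * _ = w * _ + W * _
            rw [add_mul]
          · show (if h : _ < _ then _ else _) = (if h : _ < _ then _ else _) + (if h : _ < _ then _ else _)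
            rw [dif_neg hc, dif_neg hc, dif_neg hc, h0]
            rfl
        rw [emid]
        exact ncProd_middle_add _ _ _ _
      -- the two parts
      have hsum : (∑ σ : Equiv.Perm (Fin (k*(k+1)/2+1)),
            (Equiv.Perm.sign σ : ℤ) • ncProd (List.ofFn (fw σ)))
          + (∑ σ : Equiv.Perm (Fin (k*(k+1)/2+1)),
            (Equiv.Perm.sign σ : ℤ) • ncProd (List.ofFn (fW σ))) = 0 := by
        rw [← Finset.sum_add_distrib]
        rw [← hcap1]
        apply Finset.sum_congr rfl
        intro σ _
        rw [hdec σ, smul_add]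
      -- memberships
      have hmemofFn : ∀ {n : ℕ} (g : Fin n → A), (∀ i : Fin n, ∃ mmm, g i = ι mmm) →
          ∀ y ∈ List.ofFn g, ∃ mmm, y = ι mmm := by
        intro n g hg y hy
        obtain ⟨i, hi⟩ := (List.mem_ofFn (f := g) (a := y)).mp hy
        exact hi ▸ hg i
      have hfw_mem : ∀ σ : Equiv.Perm (Fin (k*(k+1)/2+1)),
          ncProd (List.ofFn (fw σ)) ∈ Jm 0 1 := by
        intro σ
        have hjlt : ((σ.symm 0 : Fin (k*(k+1)/2+1)) : ℕ) < k*(k+1)/2+1 := (σ.symm 0).2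
        rw [ofFn_split (fw σ) _ hjlt]
        apply hmemJ 0 1
        · apply hmemofFn
          intro i
          have hne : (⟨(i:ℕ), i.2.trans hjlt⟩ : Fin (k*(k+1)/2+1)) ≠ σ.symm 0 := by
            intro h; have := congrArg Fin.val h; simp at this; omega
          obtain ⟨mmm, h1, h2, h3⟩ := hiota σ _ (hne0 σ _ hne)
          exact ⟨mmm, h2⟩
        · apply hmemofFn
          intro i
          have hne : (⟨((σ.symm 0 : Fin (k*(k+1)/2+1)) : ℕ) + 1 + (i:ℕ), by omega⟩ :
              Fin (k*(k+1)/2+1)) ≠ σ.symm 0 := by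
            intro h; have := congrArg Fin.val h; simp at this; omega
          obtain ⟨mmm, h1, h2, h3⟩ := hiota σ _ (hne0 σ _ hne)
          exact ⟨mmm, h2⟩
        · have h0 : σ ⟨((σ.symm 0 : Fin (k*(k+1)/2+1)) : ℕ), hjlt⟩ = 0 := σ.apply_symm_apply 0
          by_cases hc : ((σ.symm 0 : Fin (k*(k+1)/2+1)) : ℕ) < k*(k+1)/2+1-1
          · show (if h : _ < _ then _ else _) ∈ Jm 0 1
            rw [dif_pos hc, h0]
            exact (hbimod 0 1 _ w hw).2
          · show (if h : _ < _ then _ else _) ∈ Jm 0 1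
            rw [dif_neg hc, h0]
            exact hw
      have hfW_mem : ∀ σ : Equiv.Perm (Fin (k*(k+1)/2+1)),
          ncProd (List.ofFn (fW σ)) ∈ Jm 1 0 := by
        intro σ
        have hjlt : ((σ.symm 0 : Fin (k*(k+1)/2+1)) : ℕ) < k*(k+1)/2+1 := (σ.symm 0).2
        rw [ofFn_split (fW σ) _ hjlt]
        apply hmemJ 1 0
        · apply hmemofFn
          intro i
          have hne : (⟨(i:ℕ), i.2.trans hjlt⟩ : Fin (k*(k+1)/2+1)) ≠ σ.symm 0 := by
            intro h; have := congrArg Fin.val h; simp at this; omega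
          obtain ⟨mmm, h1, h2, h3⟩ := hiota σ _ (hne0 σ _ hne)
          exact ⟨mmm, h3⟩
        · apply hmemofFn
          intro i
          have hne : (⟨((σ.symm 0 : Fin (k*(k+1)/2+1)) : ℕ) + 1 + (i:ℕ), by omega⟩ :
              Fin (k*(k+1)/2+1)) ≠ σ.symm 0 := by
            intro h; have := congrArg Fin.val h; simp at this; omega
          obtain ⟨mmm, h1, h2, h3⟩ := hiota σ _ (hne0 σ _ hne)
          exact ⟨mmm, h3⟩
        · have h0 : σ ⟨((σ.symm 0 : Fin (k*(k+1)/2+1)) : ℕ), hjlt⟩ = 0 := σ.apply_symm_apply 0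
          by_cases hc : ((σ.symm 0 : Fin (k*(k+1)/2+1)) : ℕ) < k*(k+1)/2+1-1
          · show (if h : _ < _ then _ else _) ∈ Jm 1 0
            rw [dif_pos hc, h0]
            exact (hbimod 1 0 _ W hWmem).2
          · show (if h : _ < _ then _ else _) ∈ Jm 1 0
            rw [dif_neg hc, h0]
            exact hWmem
      -- the w-part vanishes unless σ 0 = 0
      have hvanish : ∀ σ : Equiv.Perm (Fin (k*(k+1)/2+1)), σ 0 ≠ 0 →
          ncProd (List.ofFn (fw σ)) = 0 := by
        intro σ h0ne
        have hjlt : ((σ.symm 0 : Fin (k*(k+1)/2+1)) : ℕ) < k*(k+1)/2+1 := (σ.symm 0).2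
        rw [ofFn_split (fw σ) _ hjlt]
        apply hkillprod
        · rw [Ne, List.ofFn_eq_nil_iff]
          intro hv0
          apply h0ne
          have he : σ.symm 0 = 0 := Fin.ext hv0
          have h2 : σ (σ.symm 0) = 0 := σ.apply_symm_apply 0
          rw [he] at h2
          exact h2
        · apply hmemofFn
          intro i
          have hne : (⟨(i:ℕ), i.2.trans hjlt⟩ : Fin (k*(k+1)/2+1)) ≠ σ.symm 0 := by
            intro h; have := congrArg Fin.val h; simp at this; omega
          obtain ⟨mmm, h1, h2, h3⟩ := hiota σ _ (hne0 σ _ hne)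
          exact ⟨mmm, h2⟩
        · intro mmm
          have h0 : σ ⟨((σ.symm 0 : Fin (k*(k+1)/2+1)) : ℕ), hjlt⟩ = 0 := σ.apply_symm_apply 0
          by_cases hc : ((σ.symm 0 : Fin (k*(k+1)/2+1)) : ℕ) < k*(k+1)/2+1-1
          · show ι mmm * (if h : _ < _ then _ else _) = 0
            rw [dif_pos hc, h0]
            show ι mmm * (w * xx _) = 0
            rw [← mul_assoc, hkill_left, zero_mul]
          · show ι mmm * (if h : _ < _ then _ else _) = 0
            rw [dif_neg hc, h0]
            exact hkill_left mmm
      -- extract the w-part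
      set aa : A := ∑ σ : Equiv.Perm (Fin (k*(k+1)/2+1)),
        (Equiv.Perm.sign σ : ℤ) • ncProd (List.ofFn (fw σ)) with haadef
      set bb : A := ∑ σ : Equiv.Perm (Fin (k*(k+1)/2+1)),
        (Equiv.Perm.sign σ : ℤ) • ncProd (List.ofFn (fW σ)) with hbbdef
      have haaJ : aa ∈ Jm 0 1 :=
        Submodule.sum_mem _ fun σ _ => zsmul_mem (hfw_mem σ) _
      have hbbJ : bb ∈ Jm 1 0 :=
        Submodule.sum_mem _ fun σ _ => zsmul_mem (hfW_mem σ) _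
      have haa0 : aa = 0 := by
        have h1 : aa = -bb := eq_neg_of_add_eq_zero_left hsum
        have h2 : aa ∈ Jm 0 1 ⊓ Jm 1 0 := ⟨haaJ, by rw [h1]; exact Submodule.neg_mem _ hbbJ⟩
        rw [hindep] at h2
        exact (Submodule.mem_bot F).mp h2
      -- now compute aa
      set fcap : Equiv.Perm (Fin (k*(k+1)/2)) → Fin (k*(k+1)/2) → Matrix (Fin k) (Fin k) F :=
        fun e i => if h : (i:ℕ) < k*(k+1)/2-1 then s (e i) * x' ⟨(i:ℕ), h⟩ else s (e i) with hfcap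
      have hval : ∀ e : Equiv.Perm (Fin (k*(k+1)/2)),
          ncProd (List.ofFn (fw (Equiv.Perm.decomposeFin.symm (0, e))))
          = w * ι (mm * ncProd (List.ofFn (fcap e))) := by
        intro e
        set σe := Equiv.Perm.decomposeFin.symm
          ((0 : Fin (k*(k+1)/2+1)), e) with hσe
        have hσe0 : σe 0 = 0 := Equiv.Perm.decomposeFin_symm_apply_zero 0 e
        have hσesucc : ∀ i : Fin (k*(k+1)/2), σe i.succ = (e i).succ := by
          intro i
          rw [hσe, Equiv.Perm.decomposeFin_symm_apply_succ, Equiv.swap_self]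
          rfl
        rw [List.ofFn_succ]
        have hf0 : fw σe 0 = w * ι mm := by
          show (if h : ((0 : Fin (k*(k+1)/2+1)):ℕ) < k*(k+1)/2+1-1 then _ else _) = _
          rw [dif_pos (show ((0 : Fin (k*(k+1)/2+1)):ℕ) < k*(k+1)/2+1-1 from by
            show (0:ℕ) < k*(k+1)/2+1-1; omega)]
          rw [hσe0]
          rfl
        have htail : (List.ofFn fun i : Fin (k*(k+1)/2) => fw σe i.succ)
            = List.map ι (List.ofFn (fcap e)) := by
          rw [List.map_ofFn]
          apply List.ofFn_inj.mpr
          funext i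
          show fw σe i.succ = ι (fcap e i)
          by_cases hc : (i:ℕ) < k*(k+1)/2-1
          · have hc' : ((i.succ : Fin (k*(k+1)/2+1)):ℕ) < k*(k+1)/2+1-1 := by
              show (i:ℕ)+1 < k*(k+1)/2+1-1; omega
            show (if h : _ < _ then _ else _) = _
            rw [dif_pos hc', hσesucc i]
            show ι (s (e i)) * xx _ = ι (fcap e i)
            show ι (s (e i)) * ι (X ⟨(i:ℕ)+1, by omega⟩) = ι (fcap e i)
            rw [← hιmul]
            congr 1
            show s (e i) * (if h : ((⟨(i:ℕ)+1, by omega⟩ : Fin (k*(k+1)/2)):ℕ) = 0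
              then mm else x' ⟨_ - 1, _⟩) = fcap e i
            rw [dif_neg (show ¬((⟨(i:ℕ)+1, by omega⟩ : Fin (k*(k+1)/2)):ℕ) = 0 from by
              show ¬((i:ℕ)+1 = 0); omega)]
            show s (e i) * x' ⟨(i:ℕ)+1-1, _⟩ = fcap e i
            rw [hfcap]
            show s (e i) * x' ⟨(i:ℕ)+1-1, _⟩
              = if h : (i:ℕ) < k*(k+1)/2-1 then s (e i) * x' ⟨(i:ℕ), h⟩ else s (e i)
            rw [dif_pos hc]
            congr 1
          · have hc' : ¬ ((i.succ : Fin (k*(k+1)/2+1)):ℕ) < k*(k+1)/2+1-1 := by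
              show ¬ ((i:ℕ)+1 < k*(k+1)/2+1-1); omega
            show (if h : _ < _ then _ else _) = _
            rw [dif_neg hc', hσesucc i]
            show ι (s (e i)) = ι (fcap e i)
            congr 1
            rw [hfcap]
            show s (e i) = if h : (i:ℕ) < k*(k+1)/2-1 then s (e i) * x' ⟨(i:ℕ), h⟩ else s (e i)
            rw [dif_neg hc]
        rw [hf0, htail]
        show List.foldl (· * ·) (w * ι mm) (List.map ι (List.ofFn (fcap e))) = _
        rw [hfoldl_map _ (by rw [Ne, List.ofFn_eq_nil_iff]; omega)]
        rw [mul_assoc, ← hιmul]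
      -- assemble
      have haaval : aa = w * ι (mm * C) := by
        rw [haadef]
        rw [← Equiv.sum_comp (Equiv.Perm.decomposeFin.symm)
          (fun σ : Equiv.Perm (Fin (k*(k+1)/2+1)) =>
            (Equiv.Perm.sign σ : ℤ) • ncProd (List.ofFn (fw σ)))]
        rw [Fintype.sum_prod_type]
        rw [Finset.sum_eq_single (0 : Fin (k*(k+1)/2+1))]
        · have hterm : ∀ e : Equiv.Perm (Fin (k*(k+1)/2)),
              (Equiv.Perm.sign (Equiv.Perm.decomposeFin.symm (0, e)) : ℤ) •
                ncProd (List.ofFn (fw (Equiv.Perm.decomposeFin.symm (0, e))))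
              = (Equiv.Perm.sign e : ℤ) • (w * ι (mm * ncProd (List.ofFn (fcap e)))) := by
            intro e
            rw [hval e, Equiv.Perm.decomposeFin.symm_sign, if_pos rfl, one_mul]
          rw [Finset.sum_congr rfl (fun e _ => hterm e)]
          have hψ : ∀ e : Equiv.Perm (Fin (k*(k+1)/2)),
              (Equiv.Perm.sign e : ℤ) • (w * ι (mm * ncProd (List.ofFn (fcap e))))
              = w * ι (mm * ((Equiv.Perm.sign e : ℤ) • ncProd (List.ofFn (fcap e)))) := by
            intro e
            rw [mul_smul_comm, map_zsmul, mul_smul_comm]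
          rw [Finset.sum_congr rfl (fun e _ => hψ e)]
          have hfin : (∑ e : Equiv.Perm (Fin (k*(k+1)/2)),
              (Equiv.Perm.sign e : ℤ) • ncProd (List.ofFn (fcap e))) = C := by
            rw [hCdef]
            rfl
          rw [← Finset.mul_sum, ← map_sum, ← Finset.mul_sum, hfin]
        · intro p _ hp
          apply Finset.sum_eq_zero
          intro e _
          have h0 : (Equiv.Perm.decomposeFin.symm (p, e)) 0 = p :=
            Equiv.Perm.decomposeFin_symm_apply_zero p e
          rw [hvanish _ (by rw [h0]; exact hp), smul_zero]
        · intro hmem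
          exact absurd (Finset.mem_univ _) hmem
      rw [← haaval, haa0]

    -- conclude w = 0
    obtain ⟨i0, j0, hij⟩ : ∃ i0 j0, C i0 j0 ≠ 0 := by
      by_contra hcon
      push_neg at hcon
      exact hC (by ext i j; exact hcon i j)
    have hkey2 : ∀ mm mm2 : Matrix (Fin k) (Fin k) F, w * ι (mm * C * mm2) = 0 := by
      intro mm mm2
      have h0 : w * ι (mm * C) * ι mm2 = 0 := by rw [hkey mm, zero_mul]
      rwa [mul_assoc, ← hιmul] at h0
    have hunit : ∀ r r' : Fin k, w * ι (EE r r') = 0 := by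
      intro r r'
      have h0 := hkey2 (EE r i0) (EE j0 r')
      rw [unit_mul_mul_unit, _root_.map_smul, mul_smul_comm] at h0
      rcases smul_eq_zero.mp h0 with h | h
      · exact absurd h hij
      · exact h
    have hone : w * ι 1 = 0 := by
      rw [one_eq_sum_EE hk, map_sum, Finset.mul_sum]
      apply Finset.sum_eq_zero
      intro r _
      exact hunit r r
    rw [← hwr, hone]
  constructor
  · exact (Submodule.eq_bot_iff _).mpr main
  · apply (Submodule.eq_bot_iff _).mpr
    intro v hv
    have h2 : τ v = 0 := main _ (hstar10 v hv)
    have h3 := congrArg τ h2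
    rwa [hinv, map_zero] at h3
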